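/- For every integer n ≥ 3, the integer m_n (defined in the context, equal to m_{2r+1} when n = 2r+1 is odd and to m_{2r} when n = 2r is even) satisfies m_n > 2^{2^n}. -/
import Mathlib


/-- The alternating symbol `B_{i_1,…,i_k} = b_{i_1}⋯b_{i_k} − b_{i_1}⋯b_{i_{k−1}} + ⋯
+ (−1)^{k−1} b_{i_1} + (−1)^k`, with `B` of the empty list equal to `1`. -/
def altB (b : ℕ → ℤ) (L : List ℕ) : ℤ :=
  ∑ t ∈ Finset.range (L.length + 1), (-1) ^ (L.length - t) * ((L.take t).map b).prod

/-- The list `L_j = (r+1, r, r+2, r−1, …, r+j, r+1−j)`, the concatenation of the pairs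
`(r+t, r+1−t)` for `t = 1, …, j`. -/
def loopList (r j : ℕ) : List ℕ :=
  (List.range j).flatMap fun t => [r + t + 1, r - t]

lemma altB_nil (b : ℕ → ℤ) : altB b [] = 1 := by simp [altB]

lemma altB_cons (b : ℕ → ℤ) (i : ℕ) (L : List ℕ) :
    altB b (i :: L) = b i * altB b L + (-1) ^ (L.length + 1) := by
  unfold altB
  rw [List.length_cons, Finset.sum_range_succ']
  simp only [List.take_succ_cons, List.map_cons, List.prod_cons, List.take_zero,
    List.map_nil, List.prod_nil, mul_one, Nat.succ_sub_succ_eq_sub, Nat.sub_zero]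
  rw [Finset.mul_sum]
  congr 1
  exact Finset.sum_congr rfl fun t ht => by ring

lemma altB_append (b : ℕ → ℤ) (L : List ℕ) (i : ℕ) :
    altB b (L ++ [i]) = (L.map b).prod * b i - altB b L := by
  unfold altB
  rw [List.length_append, List.length_singleton, Finset.sum_range_succ]
  have h1 : (L ++ [i]).take (L.length + 1) = L ++ [i] := by
    apply List.take_of_length_le; simp
  rw [h1]
  have h2 : ∀ t ∈ Finset.range (L.length + 1),
      (-1:ℤ) ^ (L.length + 1 - t) * (((L ++ [i]).take t).map b).prod
      = -((-1) ^ (L.length - t) * ((L.take t).map b).prod) := by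
    intro t ht
    rw [Finset.mem_range] at ht
    rw [List.take_append_of_le_length (by omega), show L.length + 1 - t = (L.length - t) + 1 by omega, pow_succ]
    ring
  rw [Finset.sum_congr rfl h2, Finset.sum_neg_distrib, Nat.sub_self, pow_zero, one_mul,
    List.map_append, List.prod_append, List.map_cons, List.map_nil,
    List.prod_cons, List.prod_nil, mul_one]
  ring

lemma loopList_zero (r : ℕ) : loopList r 0 = [] := by simp [loopList]

lemma loopList_succ (r k : ℕ) :
    loopList r (k + 1) = loopList r k ++ [r + k + 1, r - k] := by
  unfold loopList
  rw [List.range_succ, List.flatMap_append]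
  simp

lemma loopList_length (r k : ℕ) : (loopList r k).length = 2 * k := by
  induction k with
  | zero => simp [loopList_zero]
  | succ k ih => rw [loopList_succ, List.length_append, ih]; simp; omega

lemma loopList_reverse_succ (r k : ℕ) :
    (loopList r (k + 1)).reverse = (r - k) :: (r + k + 1) :: (loopList r k).reverse := by
  rw [loopList_succ]
  simp

lemma altB_append2 (b : ℕ → ℤ) (L : List ℕ) (x y : ℕ) :
    altB b (L ++ [x, y]) = (L.map b).prod * b x * (b y - 1) + altB b L := by
  have : L ++ [x, y] = (L ++ [x]) ++ [y] := by simp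
  rw [this, altB_append, altB_append]
  simp only [List.map_append, List.prod_append, List.map_cons, List.map_nil,
    List.prod_cons, List.prod_nil, mul_one]
  ring

lemma altB_cons2 (b : ℕ → ℤ) (x y : ℕ) (L : List ℕ) (h : Even L.length) :
    altB b (y :: x :: L) = b y * (b x * altB b L - 1) + 1 := by
  obtain ⟨m, hm⟩ := h
  rw [altB_cons, altB_cons]
  have h1 : (-1:ℤ) ^ (L.length + 1) = -1 := by
    rw [hm]; rw [show m + m + 1 = 2*m+1 by ring, pow_succ, pow_mul]; norm_num
  have h2 : (-1:ℤ) ^ ((x :: L).length + 1) = 1 := by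
    rw [List.length_cons, hm, show m + m + 1 + 1 = 2*(m+1) by ring, pow_mul]; norm_num
  rw [h1, h2]; ring

def expD : ℕ → ℕ
  | 0 => 0
  | (j+1) => 2^j

def expQ : ℕ → ℕ
  | 0 => 0
  | 1 => 2
  | (j+2) => 2^(j+2) + 1

def piE (r : ℕ) : ℕ → ℕ
  | 0 => 0
  | (k+1) => 2 * piE r k + expQ (r - k) + expD (r - k)

lemma piE_succ (r k : ℕ) : piE r (k+1) = 2 * piE r k + expQ (r - k) + expD (r - k) := rfl

lemma two_pow_pred (m : ℕ) (h : 1 ≤ m) : (2:ℕ)^m = 2 * 2^(m-1) := by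
  obtain ⟨t, rfl⟩ : ∃ t, m = t+1 := ⟨m-1, by omega⟩
  rw [pow_succ, Nat.add_sub_cancel]; ring

lemma piE_lb (r : ℕ) (hr : 2 ≤ r) : 2^(2*r) + 1 ≤ piE r r := by
  have main : ∀ k, k ≤ r - 1 → 2^(r+k) + 2^k ≤ piE r k + 2^(r-k) + 1 := by
    intro k
    induction k with
    | zero => intro _; simp [piE]
    | succ k ih =>
      intro hk
      have ihh := ih (by omega)
      have hrk : r - k = (r - k - 2) + 2 := by omega
      have hq : expQ (r - k) = 2^(r-k) + 1 := by
        have h0 : expQ (r-k-2+2) = 2^(r-k-2+2)+1 := rfl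
        rw [← hrk] at h0; exact h0
      have hd : expD (r - k) = 2^(r-k-1) := by
        have h0 : expD (r-k-2+2) = 2^(r-k-2+1) := rfl
        rw [← hrk] at h0
        rw [h0]; congr 1; omega
      have e1 : (2:ℕ)^(r-k) = 2 * 2^(r-k-1) := two_pow_pred _ (by omega)
      have e2 := two_pow_pred (r+(k+1)) (by omega)
      rw [show r+(k+1)-1 = r+k by omega] at e2
      have e3 := two_pow_pred (k+1) (by omega)
      rw [Nat.add_sub_cancel] at e3
      have e4 : r - (k+1) = r - k - 1 := by omega
      rw [piE_succ, hq, hd, e2, e3, e4]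
      linarith
  have h1 := main (r-1) le_rfl
  have hrr : r = (r-1)+1 := by omega
  have h2 : piE r ((r-1)+1) = 2 * piE r (r-1) + 3 := by
    rw [piE_succ, show r - (r-1) = 1 by omega]; rfl
  rw [← hrr] at h2
  have e1 : r + (r-1) = 2*r - 1 := by omega
  rw [e1] at h1
  have e2 := two_pow_pred (2*r) (by omega)
  have e3 : (2:ℕ)^(r-(r-1)) = 2 := by rw [show r-(r-1) = 1 by omega]; rfl
  rw [e3] at h1
  have e4 : (4:ℕ) ≤ 2^r := by
    calc (4:ℕ) = 2^2 := rfl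
    _ ≤ 2^r := Nat.pow_le_pow_right (by norm_num) hr
  have e5 := two_pow_pred r (by omega)
  omega

lemma piE_lb' (r : ℕ) (hr : 2 ≤ r) : 2^(2*r+1) + 2 ≤ piE r (r+1) := by
  have h1 := piE_lb r hr
  have h2 : piE r (r+1) = 2 * piE r r := by
    rw [piE_succ, Nat.sub_self]
    simp [expQ, expD]
  have e : (2:ℕ)^(2*r+1) = 2*2^(2*r) := by rw [pow_succ]; ring
  omega

section Sylvester
variable (s : ℕ → ℤ) (hs0 : s 0 = 2)
  (hsrec : ∀ m, s (m + 1) = (∏ i ∈ Finset.range (m + 1), s i) + 1)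

include hs0 hsrec

lemma syl1 : s 1 = 3 := by
  have := hsrec 0
  simpa [hs0] using this

lemma syl_step : ∀ m, s (m+2) = s (m+1) * (s (m+1) - 1) + 1 := by
  intro m
  have h1 := hsrec m
  have h2 := hsrec (m+1)
  rw [Finset.prod_range_succ] at h2
  have : (∏ i ∈ Finset.range (m+1), s i) = s (m+1) - 1 := by linarith
  rw [this] at h2
  linarith [h2]

lemma syl2 : s 2 = 7 := by
  have h := syl_step s hs0 hsrec 0
  rw [syl1 s hs0 hsrec] at h
  norm_num at h
  exact h

lemma syl_lb : ∀ j, (2:ℤ)^(2^j) + 1 ≤ s (j+1) := by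
  intro j
  induction j with
  | zero => rw [syl1 s hs0 hsrec]; norm_num
  | succ j ih =>
    have hstep := syl_step s hs0 hsrec j
    have hE : (2:ℤ)^(2^(j+1)) = 2^(2^j) * 2^(2^j) := by
      rw [← pow_add]; congr 1; rw [pow_succ]; ring
    have hp : (0:ℤ) < 2^(2^j) := by positivity
    nlinarith [ih, hp]

lemma syl_lb2 : ∀ j, 3 * (2:ℤ)^(2^(j+1) - 1) ≤ s (j+2) - 1 := by
  intro j
  induction j with
  | zero =>
    rw [syl2 s hs0 hsrec]
    norm_num
  | succ j ih =>
    have hstep := syl_step s hs0 hsrec (j+1)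
    have he : 2^(j+2) - 1 = (2^(j+1) - 1) + (2^(j+1) - 1) + 1 := by
      have h1 : (1:ℕ) ≤ 2^(j+1) := Nat.one_le_two_pow
      have h2 : (2:ℕ)^(j+2) = 2*2^(j+1) := by rw [pow_succ]; ring
      omega
    have hE : (2:ℤ)^(2^(j+2) - 1) = 2^(2^(j+1)-1) * 2^(2^(j+1)-1) * 2 := by
      rw [he, pow_add, pow_add]; ring
    have hp : (0:ℤ) < 2^(2^(j+1)-1) := by positivity
    rw [hE]
    nlinarith [ih, hp]

lemma syl_sq : ∀ j, (2:ℤ)^(2^(j+2) + 1) ≤ (s (j+2) - 1)^2 := by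
  intro j
  have h := syl_lb2 s hs0 hsrec j
  have hp : (0:ℤ) < 2^(2^(j+1)-1) := by positivity
  have he : 2^(j+2) + 1 = ((2^(j+1) - 1) + (2^(j+1) - 1)) + 3 := by
    have h1 : (1:ℕ) ≤ 2^(j+1) := Nat.one_le_two_pow
    have h2 : (2:ℕ)^(j+2) = 2*2^(j+1) := by rw [pow_succ]; ring
    omega
  have hE : (2:ℤ)^(2^(j+2)+1) = 2^(2^(j+1)-1) * 2^(2^(j+1)-1) * 8 := by
    rw [he, pow_add, pow_add]; norm_num
  rw [hE]
  nlinarith [h, hp]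

end Sylvester

set_option maxHeartbeats 1000000 in
lemma core (r K : ℕ) (b : ℕ → ℤ) (hK : K ≤ r + 1)
    (hb2 : ∀ j ≤ r, (2:ℤ)^(expD j) + 1 ≤ b j ∧ (2:ℤ)^(expQ j) ≤ (b j - 1)^2)
    (hrec : ∀ i, 1 ≤ i → i ≤ K →
      b (r + i) = 1 + (b (r + 1 - i) - 1)^2 * altB b (loopList r (i - 1))) :
    ∀ k, k ≤ K → (2:ℤ)^(piE r k) ≤ altB b (loopList r k)
      ∧ (2:ℤ)^(piE r k) ≤ ((loopList r k).map b).prod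
      ∧ (2:ℤ)^(piE r k) ≤ altB b (loopList r k).reverse := by
  intro k
  induction k with
  | zero =>
    intro _
    refine ⟨?_, ?_, ?_⟩ <;> simp [loopList_zero, altB_nil, piE]
  | succ k ih =>
    intro hk
    obtain ⟨ha, hp, hc⟩ := ih (by omega)
    have hkr : k ≤ r := by omega
    obtain ⟨hbj, hbjsq⟩ := hb2 (r-k) (Nat.sub_le r k)
    have hbj1 : (2:ℤ)^(expD (r-k)) ≤ b (r-k) - 1 := by linarith
    have hDpos : (0:ℤ) < 2^(expD (r-k)) := by positivity
    have hQPpos : (0:ℤ) < 2^(expQ (r-k) + piE r k) := by positivity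
    have hPpos : (0:ℤ) < 2^(piE r k) := by positivity
    have hP1 : (1:ℤ) ≤ 2^(piE r k) := by linarith [Int.add_one_le_of_lt hPpos]
    have hbjpos : (0:ℤ) < b (r-k) := by linarith
    have hPprodpos : (0:ℤ) < ((loopList r k).map b).prod := lt_of_lt_of_le hPpos hp
    have hapos : (0:ℤ) < altB b (loopList r k) := lt_of_lt_of_le hPpos ha
    have hcpos : (0:ℤ) < altB b (loopList r k).reverse := lt_of_lt_of_le hPpos hc
    -- value of b (r+k+1)
    have hbx : b (r + k + 1) = 1 + (b (r-k) - 1)^2 * altB b (loopList r k) := by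
      have h := hrec (k+1) (by omega) hk
      rw [show r + 1 - (k+1) = r - k by omega] at h
      exact h
    have hbxge : (2:ℤ)^(expQ (r-k) + piE r k) + 1 ≤ b (r + k + 1) := by
      rw [hbx, pow_add]
      have h1 : (2:ℤ)^(expQ (r-k)) * (2:ℤ)^(piE r k) ≤ (b (r-k) - 1)^2 * altB b (loopList r k) :=
        mul_le_mul hbjsq ha (le_of_lt hPpos) (sq_nonneg _)
      linarith
    have hbxpos : (0:ℤ) < b (r + k + 1) := by linarith
    have hexp : piE r (k+1) = piE r k + (expQ (r-k) + piE r k) + expD (r-k) := by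
      rw [piE_succ]; omega
    have hexppow : (2:ℤ)^(piE r (k+1))
        = 2^(piE r k) * 2^(expQ (r-k) + piE r k) * 2^(expD (r-k)) := by
      rw [hexp, pow_add, pow_add]
    -- goal 1 : a'
    have goal1 : (2:ℤ)^(piE r (k+1)) ≤ altB b (loopList r (k+1)) := by
      rw [loopList_succ, altB_append2]
      have inner : (2:ℤ)^(piE r k) * (2^(expQ (r-k) + piE r k) + 1)
          ≤ ((loopList r k).map b).prod * b (r + k + 1) :=
        mul_le_mul hp hbxge (by positivity) (le_of_lt hPprodpos)
      have key1 : (2:ℤ)^(piE r k) * (2^(expQ (r-k) + piE r k) + 1) * 2^(expD (r-k))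
          ≤ ((loopList r k).map b).prod * b (r + k + 1) * (b (r-k) - 1) :=
        mul_le_mul inner hbj1 (le_of_lt hDpos) (mul_nonneg (le_of_lt hPprodpos) (le_of_lt hbxpos))
      rw [hexppow]
      nlinarith [key1, ha, hPpos, hDpos, hQPpos]
    -- goal 2 : prod
    have goal2 : (2:ℤ)^(piE r (k+1)) ≤ ((loopList r (k+1)).map b).prod := by
      have hps : ((loopList r (k+1)).map b).prod
          = ((loopList r k).map b).prod * b (r + k + 1) * b (r-k) := by
        rw [loopList_succ]
        simp only [List.map_append, List.prod_append, List.map_cons, List.map_nil,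
          List.prod_cons, List.prod_nil, mul_one]
        ring
      rw [hps]
      have inner : (2:ℤ)^(piE r k) * (2^(expQ (r-k) + piE r k) + 1)
          ≤ ((loopList r k).map b).prod * b (r + k + 1) :=
        mul_le_mul hp hbxge (by positivity) (le_of_lt hPprodpos)
      have key2 : (2:ℤ)^(piE r k) * (2^(expQ (r-k) + piE r k) + 1) * 2^(expD (r-k))
          ≤ ((loopList r k).map b).prod * b (r + k + 1) * b (r-k) :=
        mul_le_mul inner (by linarith) (le_of_lt hDpos)
          (mul_nonneg (le_of_lt hPprodpos) (le_of_lt hbxpos))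
      rw [hexppow]
      nlinarith [key2, hPpos, hDpos, hQPpos]
    -- goal 3 : c'
    have goal3 : (2:ℤ)^(piE r (k+1)) ≤ altB b (loopList r (k+1)).reverse := by
      have heven : Even (loopList r k).reverse.length := by
        rw [List.length_reverse, loopList_length]; exact even_two_mul k
      rw [loopList_reverse_succ, altB_cons2 b _ _ _ heven]
      have key3a : ((2:ℤ)^(expQ (r-k) + piE r k) + 1) * 2^(piE r k)
          ≤ b (r + k + 1) * altB b (loopList r k).reverse :=
        mul_le_mul hbxge hc (le_of_lt hPpos) (le_of_lt hbxpos)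
      have key3b : (2:ℤ)^(expQ (r-k) + piE r k) * 2^(piE r k)
          ≤ b (r + k + 1) * altB b (loopList r k).reverse - 1 := by nlinarith [key3a, hP1]
      have key3 : ((2:ℤ)^(expD (r-k)) + 1) * ((2:ℤ)^(expQ (r-k) + piE r k) * 2^(piE r k))
          ≤ b (r-k) * (b (r + k + 1) * altB b (loopList r k).reverse - 1) :=
        mul_le_mul hbj key3b (by positivity) (le_of_lt hbjpos)
      rw [hexppow]
      nlinarith [key3, hPpos, hDpos, hQPpos]
    exact ⟨goal1, goal2, goal3⟩

lemma hb2_of (s : ℕ → ℤ) (hs0 : s 0 = 2)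
    (hsrec : ∀ m, s (m + 1) = (∏ i ∈ Finset.range (m + 1), s i) + 1)
    (r : ℕ) (b : ℕ → ℤ) (hb : ∀ i ≤ r, b i = s i) :
    ∀ j ≤ r, (2:ℤ)^(expD j) + 1 ≤ b j ∧ (2:ℤ)^(expQ j) ≤ (b j - 1)^2 := by
  intro j hj
  rw [hb j hj]
  match j with
  | 0 => rw [hs0]; refine ⟨?_, ?_⟩ <;> norm_num [expD, expQ]
  | 1 => rw [syl1 s hs0 hsrec]; refine ⟨?_, ?_⟩ <;> norm_num [expD, expQ]
  | (m+2) =>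
    refine ⟨?_, ?_⟩
    · have h := syl_lb s hs0 hsrec (m+1)
      have hd : expD (m+2) = 2^(m+1) := rfl
      rw [hd]; exact h
    · have h := syl_sq s hs0 hsrec m
      have hq : expQ (m+2) = 2^(m+2) + 1 := rfl
      rw [hq]; exact h

lemma two_pow_lt_two_pow (a c : ℕ) (h : a < c) : (2:ℤ)^a < 2^c :=
  pow_lt_pow_right₀ (by norm_num) h

/-- For every `n ≥ 3`, the group order `m_n` of the paper's klt Calabi–Yau variety
example of dimension `n` (equal to `m_{2r+1} = B_{(0,2r+1,1,2r,…,r,r+1)}` when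
`n = 2r+1` is odd, and to `m_{2r} = B_{(1,2r,2,2r−1,…,r,r+1)}` when `n = 2r` is even)
satisfies `m_n > 2^(2^n)`; i.e. the minimal log discrepancy `1/m_n` is smaller than
`1/2^(2^n)`. -/
theorem group_order_doubly_exponential (n : ℕ) (hn : 3 ≤ n)
    (s : ℕ → ℤ) (hs0 : s 0 = 2)
    (hsrec : ∀ m, s (m + 1) = (∏ i ∈ Finset.range (m + 1), s i) + 1) :
    ∀ r : ℕ, ∀ b : ℕ → ℤ, (∀ i ≤ r, b i = s i) →
      ((n = 2 * r + 1 →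
        (∀ i, 1 ≤ i → i ≤ r + 1 →
          b (r + i) = 1 + (b (r + 1 - i) - 1) ^ 2 * altB b (loopList r (i - 1))) →
        (2 : ℤ) ^ (2 ^ n) < altB b (loopList r (r + 1)).reverse) ∧
      (n = 2 * r →
        (∀ i, 1 ≤ i → i ≤ r →
          b (r + i) = 1 + (b (r + 1 - i) - 1) ^ 2 * altB b (loopList r (i - 1))) →
        (2 : ℤ) ^ (2 ^ n) < altB b (loopList r r).reverse)) := by
  intro r b hb
  have hb2 := hb2_of s hs0 hsrec r b hb
  constructor
  · -- odd case
    intro hno hrec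
    rcases Nat.lt_or_ge r 2 with hr1 | hr2
    · -- r = 1, n = 3 : explicit computation
      have hr : r = 1 := by omega
      subst hr
      have hn3 : n = 3 := hno
      subst hn3
      have hb0 : b 0 = 2 := by rw [hb 0 (by norm_num), hs0]
      have hb1 : b 1 = 3 := by rw [hb 1 le_rfl, syl1 s hs0 hsrec]
      have hA0 : altB b (loopList 1 0) = 1 := by rw [loopList_zero, altB_nil]
      have hbb2 : b 2 = 5 := by
        have h := hrec 1 le_rfl (by norm_num)
        rw [hA0] at h
        norm_num at h
        rw [h, hb1]; norm_num
      have hL1 : loopList 1 1 = [2, 1] := rfl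
      have hA1 : altB b (loopList 1 1) = 11 := by
        rw [hL1, altB_cons, altB_cons, altB_nil, hb1, hbb2]
        norm_num
      have hbb3 : b 3 = 12 := by
        have h := hrec 2 (by norm_num) (by norm_num)
        rw [show (1:ℕ) + 2 = 3 from rfl, show (1:ℕ) + 1 - 2 = 0 from rfl,
          show (2:ℕ) - 1 = 1 from rfl, hA1] at h
        rw [h, hb0]; norm_num
      have hL2 : (loopList 1 2).reverse = [0, 3, 1, 2] := rfl
      have hA2 : altB b [2] = 4 := by
        rw [show ([2] : List ℕ) = 2 :: [] from rfl, altB_cons, altB_nil, hbb2]; norm_num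
      have hA12 : altB b [1, 2] = 13 := by
        rw [show ([1,2] : List ℕ) = 1 :: [2] from rfl, altB_cons, hA2, hb1]; norm_num
      have hA312 : altB b [3, 1, 2] = 155 := by
        rw [show ([3,1,2] : List ℕ) = 3 :: [1,2] from rfl, altB_cons, hA12, hbb3]; norm_num
      have hA0312 : altB b [0, 3, 1, 2] = 311 := by
        rw [show ([0,3,1,2] : List ℕ) = 0 :: [3,1,2] from rfl, altB_cons, hA312, hb0]; norm_num
      rw [hL2, hA0312]
      norm_num
    · -- r ≥ 2
      obtain ⟨_, _, hcfin⟩ := core r (r+1) b le_rfl hb2 hrec (r+1) le_rfl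
      have hpi := piE_lb' r hr2
      have hlt : (2:ℤ)^(2^n) < 2^(piE r (r+1)) := by
        apply two_pow_lt_two_pow
        have : 2^n = 2^(2*r+1) := by rw [hno]
        omega
      exact lt_of_lt_of_le hlt hcfin
  · -- even case
    intro hne hrec
    have hr2 : 2 ≤ r := by omega
    obtain ⟨_, _, hcfin⟩ := core r r b (by omega) hb2 hrec r le_rfl
    have hpi := piE_lb r hr2
    have hlt : (2:ℤ)^(2^n) < 2^(piE r r) := by
      apply two_pow_lt_two_pow
      have : 2^n = 2^(2*r) := by rw [hne]
      omega
    exact lt_of_lt_of_le hlt hcfin
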